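/- Let P₁, P₂, P₃ be elements of a complex Banach algebra and define W(τ) = exp(τP₁)·∫₀^τ exp(ηP₂)·[P₂,P₃]·exp(−ηP₂) dη − (∫₀^τ exp(ηP₁)·[P₂,P₃]·exp(−ηP₁) dη)·exp(τP₁). Then for every real τ ≥ 0, W(τ) = ∫₀^τ exp((τ−η)P₁)·(∫₀^η exp(ξP₁)·[P₁,[P₂,P₃]]·exp(−ξP₁) dξ)·exp(ηP₁) dη + ∫₀^τ exp(τP₁)·(∫₀^η exp(ξP₂)·[P₂,[P₂,P₃]]·exp(−ξP₂) dξ) dη. -/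

import Mathlib

open NormedSpace intervalIntegral MeasureTheory

section Aux
variable {𝒜 : Type*} [NormedRing 𝒜] [NormedAlgebra ℂ 𝒜] [CompleteSpace 𝒜]

noncomputable local instance : NormedAlgebra ℚ 𝒜 := NormedAlgebra.restrictScalars ℚ ℂ 𝒜

lemma contExp (X : 𝒜) : Continuous fun t : ℝ => exp (t • X) :=
  exp_continuous.comp (continuous_id.smul continuous_const)

lemma contExpNeg (X : 𝒜) : Continuous fun t : ℝ => exp (-t • X) :=
  exp_continuous.comp ((continuous_id.neg).smul continuous_const)

lemma expSmulAdd (X : 𝒜) (a b : ℝ) :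
    exp ((a + b) • X) = exp (a • X) * exp (b • X) := by
  rw [add_smul, exp_add_of_commute (((Commute.refl X).smul_left a).smul_right b)]

lemma expNegMul (X : 𝒜) (a : ℝ) : exp (-a • X) * exp (a • X) = 1 := by
  rw [← expSmulAdd, neg_add_cancel, zero_smul, exp_zero]

lemma conj_hasDeriv (X C : 𝒜) (t : ℝ) :
    HasDerivAt (fun s : ℝ => exp (s • X) * C * exp (-s • X))
      (exp (t • X) * (X * C - C * X) * exp (-t • X)) t := by
  have h1 : HasDerivAt (fun s : ℝ => exp (s • X)) (exp (t • X) * X) t :=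
    hasDerivAt_exp_smul_const X t
  have h2 : HasDerivAt (fun s : ℝ => exp (-s • X)) (-(exp (-t • X) * X)) t := by
    have h2' := hasDerivAt_exp_smul_const (𝕂 := ℝ) (-X) t
    simp only [smul_neg, ← neg_smul, mul_neg] at h2'
    exact h2'
  have h := (h1.mul_const C).mul h2
  have hc : exp (-t • X) * X = X * exp (-t • X) :=
    ((((Commute.refl X).smul_right (-t)).exp_right).eq).symm
  convert h using 1
  · rfl
  rw [hc]
  noncomm_ring

lemma conj_integral (X C : 𝒜) (η : ℝ) :
    (∫ ξ in (0:ℝ)..η, exp (ξ • X) * (X * C - C * X) * exp (-ξ • X))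
      = exp (η • X) * C * exp (-η • X) - C := by
  have h := intervalIntegral.integral_eq_sub_of_hasDerivAt
    (f := fun s : ℝ => exp (s • X) * C * exp (-s • X))
    (f' := fun s : ℝ => exp (s • X) * (X * C - C * X) * exp (-s • X))
    (a := 0) (b := η)
    (fun t _ => conj_hasDeriv X C t)
    ((((contExp X).mul continuous_const).mul (contExpNeg X)).intervalIntegrable 0 η)
  simpa [exp_zero] using h

lemma int_const_mul (a : 𝒜) (f : ℝ → 𝒜) {x y : ℝ}
    (hf : IntervalIntegrable f volume x y) :
    (∫ t in x..y, a * f t) = a * ∫ t in x..y, f t := by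
  simpa using (ContinuousLinearMap.mul ℝ 𝒜 a).intervalIntegral_comp_comm hf

lemma int_mul_const (a : 𝒜) (f : ℝ → 𝒜) {x y : ℝ}
    (hf : IntervalIntegrable f volume x y) :
    (∫ t in x..y, f t * a) = (∫ t in x..y, f t) * a := by
  simpa using ((ContinuousLinearMap.mul ℝ 𝒜).flip a).intervalIntegral_comp_comm hf

end Aux

/-- For `P₁, P₂, P₃` in a complex Banach algebra and
`W(τ) = exp(τP₁)·∫₀^τ exp(ηP₂)[P₂,P₃]exp(−ηP₂) dη
       − (∫₀^τ exp(ηP₁)[P₂,P₃]exp(−ηP₁) dη)·exp(τP₁)`,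
for every `τ ≥ 0`:
`W(τ) = ∫₀^τ exp((τ−η)P₁)·(∫₀^η exp(ξP₁)[P₁,[P₂,P₃]]exp(−ξP₁) dξ)·exp(ηP₁) dη
      + ∫₀^τ exp(τP₁)·(∫₀^η exp(ξP₂)[P₂,[P₂,P₃]]exp(−ξP₂) dξ) dη`. -/
theorem W_integral_formula {𝒜 : Type*} [NormedRing 𝒜] [NormedAlgebra ℂ 𝒜]
    [CompleteSpace 𝒜] (P₁ P₂ P₃ : 𝒜) :
    ∀ τ : ℝ, 0 ≤ τ →
      exp ((τ : ℂ) • P₁)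
          * (∫ η in (0 : ℝ)..τ, exp ((η : ℂ) • P₂) * (P₂ * P₃ - P₃ * P₂)
              * exp (-((η : ℂ) • P₂)))
        - (∫ η in (0 : ℝ)..τ, exp ((η : ℂ) • P₁) * (P₂ * P₃ - P₃ * P₂)
              * exp (-((η : ℂ) • P₁)))
            * exp ((τ : ℂ) • P₁)
      = (∫ η in (0 : ℝ)..τ, exp (((τ - η : ℝ) : ℂ) • P₁)
            * (∫ ξ in (0 : ℝ)..η, exp ((ξ : ℂ) • P₁)
                * (P₁ * (P₂ * P₃ - P₃ * P₂) - (P₂ * P₃ - P₃ * P₂) * P₁)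
                * exp (-((ξ : ℂ) • P₁)))
            * exp ((η : ℂ) • P₁))
        + ∫ η in (0 : ℝ)..τ, exp ((τ : ℂ) • P₁)
            * ∫ ξ in (0 : ℝ)..η, exp ((ξ : ℂ) • P₂)
                * (P₂ * (P₂ * P₃ - P₃ * P₂) - (P₂ * P₃ - P₃ * P₂) * P₂)
                * exp (-((ξ : ℂ) • P₂)) := by
  intro τ _
  letI : NormedAlgebra ℚ 𝒜 := NormedAlgebra.restrictScalars ℚ ℂ 𝒜
  have hEE : (exp : 𝒜 → 𝒜) = exp := rfl
  simp only [Complex.coe_smul, ← neg_smul, hEE]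
  set C : 𝒜 := P₂ * P₃ - P₃ * P₂ with hC
  clear_value C
  simp only [conj_integral P₁ C, conj_integral P₂ C]
  have cg1 : Continuous fun η : ℝ => exp (η • P₁) * C * exp (-η • P₁) :=
    ((contExp P₁).mul continuous_const).mul (contExpNeg P₁)
  have cg2 : Continuous fun η : ℝ => exp (η • P₂) * C * exp (-η • P₂) :=
    ((contExp P₂).mul continuous_const).mul (contExpNeg P₂)
  have e1 : ∀ η : ℝ, exp ((τ - η) • P₁) * exp (η • P₁) = exp (τ • P₁) := by
    intro η
    rw [← expSmulAdd]
    norm_num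
  have hpt : ∀ η : ℝ,
      exp ((τ - η) • P₁) * (exp (η • P₁) * C * exp (-η • P₁) - C) * exp (η • P₁)
        = exp (τ • P₁) * C - exp ((τ - η) • P₁) * C * exp (η • P₁) := by
    intro η
    simp only [mul_sub, sub_mul, mul_assoc, expNegMul, mul_one]
    rw [← mul_assoc, e1 η]
  have hA : (∫ η in (0:ℝ)..τ,
        exp ((τ - η) • P₁) * (exp (η • P₁) * C * exp (-η • P₁) - C) * exp (η • P₁))
      = τ • (exp (τ • P₁) * C)
        - (∫ η in (0:ℝ)..τ, exp (η • P₁) * C * exp (-η • P₁)) * exp (τ • P₁) := by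
    rw [intervalIntegral.integral_congr (g := fun η : ℝ =>
      exp (τ • P₁) * C - exp ((τ - η) • P₁) * C * exp (η • P₁)) (fun η _ => hpt η)]
    have cint : Continuous fun η : ℝ => exp ((τ - η) • P₁) * C * exp (η • P₁) := by
      refine ((Continuous.mul ?_ continuous_const).mul (contExp P₁))
      exact exp_continuous.comp ((continuous_const.sub continuous_id).smul continuous_const)
    rw [intervalIntegral.integral_sub (intervalIntegrable_const)
      (cint.intervalIntegrable 0 τ), intervalIntegral.integral_const, sub_zero]
    congr 1
    have hrefl := intervalIntegral.integral_comp_sub_left (a := (0:ℝ)) (b := τ)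
      (fun s : ℝ => exp (s • P₁) * C * exp ((τ - s) • P₁)) τ
    simp only [sub_sub_cancel, sub_self, sub_zero] at hrefl
    rw [hrefl]
    have hpt2 : ∀ s : ℝ, exp (s • P₁) * C * exp ((τ - s) • P₁)
        = exp (s • P₁) * C * exp (-s • P₁) * exp (τ • P₁) := by
      intro s
      rw [mul_assoc (exp (s • P₁) * C), ← expSmulAdd, neg_add_eq_sub]
    rw [intervalIntegral.integral_congr (g := fun s : ℝ =>
      exp (s • P₁) * C * exp (-s • P₁) * exp (τ • P₁)) (fun s _ => hpt2 s)]
    exact int_mul_const _ _ (cg1.intervalIntegrable 0 τ)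
  have hB : (∫ η in (0:ℝ)..τ,
        exp (τ • P₁) * (exp (η • P₂) * C * exp (-η • P₂) - C))
      = exp (τ • P₁)
        * ((∫ η in (0:ℝ)..τ, exp (η • P₂) * C * exp (-η • P₂)) - τ • C) := by
    rw [int_const_mul _ (fun η : ℝ => exp (η • P₂) * C * exp (-η • P₂) - C) ((cg2.sub continuous_const).intervalIntegrable 0 τ),
      intervalIntegral.integral_sub (cg2.intervalIntegrable 0 τ) intervalIntegrable_const,
      intervalIntegral.integral_const, sub_zero]
  rw [hA, hB, mul_sub, mul_smul_comm]
  abel
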